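/- Let (D₁, D₂, D₃, c, g₁, g₂, g₃, ξ) be a BKL datum satisfying the BKL constraints that is in normal form with parameter u, and suppose u ≠ 1/2 and u ≠ 2 at every point of ℝ³. Define g₂³ = −c_{12}^1 − D₂(ξ) and g₃⁴ = −c_{31}^1 + D₃(ξ), and set D̃₁ = D₁ − (2 g₃⁴/(u−2)) D₂ + (2 u g₂³/(2u−1)) D₃. Then D̃₁, D₂, D₃ is a frame, and (D̃₁, D₂, D₃, c̃, −1/2, (1−u)/2, (1−1/u)/2, ξ), with c̃ its structure functions, is a BKL datum satisfying the BKL constraints. -/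

import Mathlib

noncomputable section

/-- Points of `ℝ³`. -/
abbrev R3 : Type := Fin 3 → ℝ

/-- Lie bracket of vector fields on `ℝ³`:
`[X,Y](x) = (DY)_x(X(x)) − (DX)_x(Y(x))`. -/
def lieB (X Y : R3 → R3) : R3 → R3 :=
  fun x => fderiv ℝ Y x (X x) - fderiv ℝ X x (Y x)

/-- Directional derivative `X(f)(x) = (Df)_x(X(x))`. -/
def dirD (X : R3 → R3) (f : R3 → ℝ) : R3 → ℝ :=
  fun x => fderiv ℝ f x (X x)

/-- A frame: three smooth vector fields, linearly independent at every point. -/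
def IsFrame (D : Fin 3 → R3 → R3) : Prop :=
  (∀ i, ContDiff ℝ (⊤ : ℕ∞) (D i)) ∧ ∀ x : R3, LinearIndependent ℝ fun i => D i x

/-- `c` is the family of (smooth) structure functions of the frame `D`:
`[D j, D k] = ∑ i, c j k i • D i`.  Here `c j k i` stands for `c_{jk}^i`. -/
def IsStructFns (D : Fin 3 → R3 → R3) (c : Fin 3 → Fin 3 → Fin 3 → R3 → ℝ) : Prop :=
  (∀ j k i, ContDiff ℝ (⊤ : ℕ∞) (c j k i)) ∧
    ∀ j k, ∀ x : R3, lieB (D j) (D k) x = ∑ i, c j k i x • D i x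

/-- `(i,j,k)` is a cyclic permutation of `(1,2,3)` (as indices `(0,1,2)`). -/
def Cyclic (i j k : Fin 3) : Prop :=
  (i, j, k) = (0, 1, 2) ∨ (i, j, k) = (1, 2, 0) ∨ (i, j, k) = (2, 0, 1)

/-- The BKL constraint equations for the datum `(D, c, g, ξ)`. -/
def BKLConstraints (D : Fin 3 → R3 → R3) (c : Fin 3 → Fin 3 → Fin 3 → R3 → ℝ)
    (g : Fin 3 → R3 → ℝ) (ξ : R3 → ℝ) : Prop :=
  (∀ x : R3, g 1 x * g 2 x + g 2 x * g 0 x + g 0 x * g 1 x = 0) ∧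
    ∀ i j k : Fin 3, Cyclic i j k → ∀ x : R3,
      dirD (D i) (fun y => g j y + g k y) x + c i j j x * (g i x - g j x)
        + c i k k x * (g i x - g k x) - 2 * dirD (D i) ξ x * g i x = 0

/-- Smoothness of the functions in a BKL datum. -/
def SmoothDatum (g : Fin 3 → R3 → ℝ) (ξ : R3 → ℝ) : Prop :=
  (∀ i, ContDiff ℝ (⊤ : ℕ∞) (g i)) ∧ ContDiff ℝ (⊤ : ℕ∞) ξ

/-- `B^f = exp (f · log B)`. -/
def bpow (B f : R3 → ℝ) : R3 → ℝ := fun x => Real.exp (f x * Real.log (B x))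

/-- The transformed frame `D̂ i = σ A B^(g j + g k) • D i`, `(i,j,k)` cyclic. -/
def confFrame (D : Fin 3 → R3 → R3) (g : Fin 3 → R3 → ℝ) (A B : R3 → ℝ) (σ : ℝ) :
    Fin 3 → R3 → R3 :=
  fun i x => (σ * A x * bpow B (fun y => g (i + 1) y + g (i + 2) y) x) • D i x


/-- `g₂³ = −c_{12}^1 − D₂(ξ)` (indices `1,2,3` are `0,1,2`). -/
def g23fn (D : Fin 3 → R3 → R3) (c : Fin 3 → Fin 3 → Fin 3 → R3 → ℝ) (ξ : R3 → ℝ) :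
    R3 → ℝ :=
  fun x => -c 0 1 0 x - dirD (D 1) ξ x

/-- `g₃⁴ = −c_{31}^1 + D₃(ξ)`. -/
def g34fn (D : Fin 3 → R3 → R3) (c : Fin 3 → Fin 3 → Fin 3 → R3 → ℝ) (ξ : R3 → ℝ) :
    R3 → ℝ :=
  fun x => -c 2 0 0 x + dirD (D 2) ξ x

/-- `D̃₁ = D₁ − (2 g₃⁴/(u−2)) D₂ + (2 u g₂³/(2u−1)) D₃`. -/
def tiltedD1 (D : Fin 3 → R3 → R3) (c : Fin 3 → Fin 3 → Fin 3 → R3 → ℝ)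
    (ξ u : R3 → ℝ) : R3 → R3 :=
  fun x => D 0 x - (2 * g34fn D c ξ x / (u x - 2)) • D 1 x
    + (2 * u x * g23fn D c ξ x / (2 * u x - 1)) • D 2 x

/-- Normal form: `(g₁,g₂,g₃) = (1/2, −(1+u)/2, −(1+1/u)/2)` and `c_{23}^1 = −2`. -/
def IsNormalForm (c : Fin 3 → Fin 3 → Fin 3 → R3 → ℝ)
    (g : Fin 3 → R3 → ℝ) (u : R3 → ℝ) : Prop :=
  ContDiff ℝ (⊤ : ℕ∞) u ∧ (∀ x : R3, 0 < u x) ∧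
    (∀ x : R3, g 0 x = 1 / 2) ∧ (∀ x : R3, g 1 x = -(1 + u x) / 2) ∧
    (∀ x : R3, g 2 x = -(1 + 1 / u x) / 2) ∧ ∀ x : R3, c 1 2 0 x = -2


/-! ### Auxiliary lemmas -/

lemma two_le_inftop : (2 : WithTop ℕ∞) ≤ ((⊤ : ℕ∞) : WithTop ℕ∞) := by
  rw [show ((2 : WithTop ℕ∞)) = (((2 : ℕ∞)) : WithTop ℕ∞) by rfl, WithTop.coe_le_coe]
  exact le_top

lemma one_le_inftop : (1 : WithTop ℕ∞) ≤ ((⊤ : ℕ∞) : WithTop ℕ∞) := by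
  rw [show ((1 : WithTop ℕ∞)) = (((1 : ℕ∞)) : WithTop ℕ∞) by rfl, WithTop.coe_le_coe]
  exact le_top

lemma lieB_left3 (X Y Z W : R3 → R3) (f g h : R3 → ℝ) (x : R3)
    (hX : DifferentiableAt ℝ X x) (hY : DifferentiableAt ℝ Y x) (hZ : DifferentiableAt ℝ Z x)
    (hf : DifferentiableAt ℝ f x) (hg : DifferentiableAt ℝ g x) (hh : DifferentiableAt ℝ h x) :
    lieB (fun y => f y • X y + g y • Y y + h y • Z y) W x
      = f x • lieB X W x + g x • lieB Y W x + h x • lieB Z W x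
        - dirD W f x • X x - dirD W g x • Y x - dirD W h x • Z x := by
  have h' : HasFDerivAt (fun y => f y • X y + g y • Y y + h y • Z y)
      ((f x • fderiv ℝ X x + (fderiv ℝ f x).smulRight (X x))
        + (g x • fderiv ℝ Y x + (fderiv ℝ g x).smulRight (Y x))
        + (h x • fderiv ℝ Z x + (fderiv ℝ h x).smulRight (Z x))) x :=
    ((hf.hasFDerivAt.smul hX.hasFDerivAt).add (hg.hasFDerivAt.smul hY.hasFDerivAt)).add
      (hh.hasFDerivAt.smul hZ.hasFDerivAt)
  simp only [lieB, dirD, h'.fderiv, ContinuousLinearMap.add_apply,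
    ContinuousLinearMap.coe_smul', Pi.smul_apply, ContinuousLinearMap.smulRight_apply,
    map_add, map_smul]
  module

lemma lieB_right3 (X Y Z W : R3 → R3) (f g h : R3 → ℝ) (x : R3)
    (hX : DifferentiableAt ℝ X x) (hY : DifferentiableAt ℝ Y x) (hZ : DifferentiableAt ℝ Z x)
    (hf : DifferentiableAt ℝ f x) (hg : DifferentiableAt ℝ g x) (hh : DifferentiableAt ℝ h x) :
    lieB W (fun y => f y • X y + g y • Y y + h y • Z y) x
      = f x • lieB W X x + g x • lieB W Y x + h x • lieB W Z x
        + dirD W f x • X x + dirD W g x • Y x + dirD W h x • Z x := by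
  have h' : HasFDerivAt (fun y => f y • X y + g y • Y y + h y • Z y)
      ((f x • fderiv ℝ X x + (fderiv ℝ f x).smulRight (X x))
        + (g x • fderiv ℝ Y x + (fderiv ℝ g x).smulRight (Y x))
        + (h x • fderiv ℝ Z x + (fderiv ℝ h x).smulRight (Z x))) x :=
    ((hf.hasFDerivAt.smul hX.hasFDerivAt).add (hg.hasFDerivAt.smul hY.hasFDerivAt)).add
      (hh.hasFDerivAt.smul hZ.hasFDerivAt)
  simp only [lieB, dirD, h'.fderiv, ContinuousLinearMap.add_apply,
    ContinuousLinearMap.coe_smul', Pi.smul_apply, ContinuousLinearMap.smulRight_apply,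
    map_add, map_smul]
  module


lemma lieB_left2 (X Y Z W : R3 → R3) (f g : R3 → ℝ) (x : R3)
    (hX : DifferentiableAt ℝ X x) (hY : DifferentiableAt ℝ Y x) (hZ : DifferentiableAt ℝ Z x)
    (hf : DifferentiableAt ℝ f x) (hg : DifferentiableAt ℝ g x) :
    lieB (fun y => X y + f y • Y y + g y • Z y) W x
      = lieB X W x + f x • lieB Y W x + g x • lieB Z W x
        - dirD W f x • Y x - dirD W g x • Z x := by
  have h' : HasFDerivAt (fun y => X y + f y • Y y + g y • Z y)
      (fderiv ℝ X x + (f x • fderiv ℝ Y x + (fderiv ℝ f x).smulRight (Y x))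
        + (g x • fderiv ℝ Z x + (fderiv ℝ g x).smulRight (Z x))) x :=
    (hX.hasFDerivAt.add (hf.hasFDerivAt.smul hY.hasFDerivAt)).add
      (hg.hasFDerivAt.smul hZ.hasFDerivAt)
  simp only [lieB, dirD, h'.fderiv, ContinuousLinearMap.add_apply,
    ContinuousLinearMap.coe_smul', Pi.smul_apply, ContinuousLinearMap.smulRight_apply,
    map_add, map_smul]
  module

lemma frame_coeff (v : Fin 3 → R3) (hv : LinearIndependent ℝ v) {a0 a1 a2 b0 b1 b2 : ℝ}
    (h : a0 • v 0 + a1 • v 1 + a2 • v 2 = b0 • v 0 + b1 • v 1 + b2 • v 2) :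
    a0 = b0 ∧ a1 = b1 ∧ a2 = b2 := by
  have h' := Fintype.linearIndependent_iff.mp hv ![a0 - b0, a1 - b1, a2 - b2] ?_
  · refine ⟨?_, ?_, ?_⟩
    · have := h' 0; simp at this; linarith
    · have := h' 1; simp at this; linarith
    · have := h' 2; simp at this; linarith
  · rw [Fin.sum_univ_three]
    simp only [Matrix.cons_val_zero, Matrix.cons_val_one, Matrix.head_cons,
      Matrix.cons_val_two, Matrix.tail_cons]
    linear_combination (norm := module) h

lemma dirD_contDiff {X : R3 → R3} {f : R3 → ℝ} (hX : ContDiff ℝ (⊤ : ℕ∞) X)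
    (hf : ContDiff ℝ (⊤ : ℕ∞) f) : ContDiff ℝ (⊤ : ℕ∞) (dirD X f) :=
  (hf.fderiv_right (by exact_mod_cast le_top)).clm_apply hX

lemma dirD_comm {ξ : R3 → ℝ} (hξ : ContDiff ℝ (⊤ : ℕ∞) ξ) {X Y : R3 → R3} {x : R3}
    (hX : DifferentiableAt ℝ X x) (hY : DifferentiableAt ℝ Y x) :
    dirD X (dirD Y ξ) x - dirD Y (dirD X ξ) x = fderiv ℝ ξ x (lieB X Y x) := by
  have hd : ∀ y, HasFDerivAt ξ (fderiv ℝ ξ y) y := fun y =>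
    (hξ.differentiable (by simp) y).hasFDerivAt
  have hξ' : ContDiff ℝ (⊤ : ℕ∞) (fderiv ℝ ξ) := hξ.fderiv_right (by exact_mod_cast le_top)
  have hxx : HasFDerivAt (fderiv ℝ ξ) (fderiv ℝ (fderiv ℝ ξ) x) x :=
    (hξ'.differentiable (by simp) x).hasFDerivAt
  have hsymm := second_derivative_symmetric hd hxx (X x) (Y x)
  have e1 : HasFDerivAt (fun y => fderiv ℝ ξ y (Y y))
      ((fderiv ℝ ξ x).comp (fderiv ℝ Y x) + (fderiv ℝ (fderiv ℝ ξ) x).flip (Y x)) x :=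
    hxx.clm_apply hY.hasFDerivAt
  have e2 : HasFDerivAt (fun y => fderiv ℝ ξ y (X y))
      ((fderiv ℝ ξ x).comp (fderiv ℝ X x) + (fderiv ℝ (fderiv ℝ ξ) x).flip (X x)) x :=
    hxx.clm_apply hX.hasFDerivAt
  simp only [dirD, lieB]
  rw [show (fun y => fderiv ℝ ξ y (Y y)) = dirD Y ξ from rfl] at e1
  rw [show (fun y => fderiv ℝ ξ y (X y)) = dirD X ξ from rfl] at e2
  rw [e1.fderiv, e2.fderiv]
  simp only [ContinuousLinearMap.add_apply, ContinuousLinearMap.coe_comp', Function.comp_apply,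
    ContinuousLinearMap.flip_apply, map_sub]
  rw [hsymm]
  ring

set_option maxHeartbeats 2000000 in
/-- the future-asymptotic datum of a normal-form datum again
satisfies the BKL constraints. -/
theorem bkl_out_datum
    (D : Fin 3 → R3 → R3) (c : Fin 3 → Fin 3 → Fin 3 → R3 → ℝ)
    (g : Fin 3 → R3 → ℝ) (ξ : R3 → ℝ)
    (hD : IsFrame D) (hc : IsStructFns D c) (hgξ : SmoothDatum g ξ)
    (hcon : BKLConstraints D c g ξ)
    (u : R3 → ℝ) (hnf : IsNormalForm c g u)
    (hu : ∀ x : R3, u x ≠ 1 / 2 ∧ u x ≠ 2) :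
    IsFrame ![tiltedD1 D c ξ u, D 1, D 2] ∧
    SmoothDatum ![fun _ : R3 => -(1 / 2 : ℝ), fun x : R3 => (1 - u x) / 2,
      fun x : R3 => (1 - 1 / u x) / 2] ξ ∧
    ∀ ctil : Fin 3 → Fin 3 → Fin 3 → R3 → ℝ,
      IsStructFns ![tiltedD1 D c ξ u, D 1, D 2] ctil →
      BKLConstraints ![tiltedD1 D c ξ u, D 1, D 2] ctil
        ![fun _ : R3 => -(1 / 2 : ℝ), fun x : R3 => (1 - u x) / 2,
          fun x : R3 => (1 - 1 / u x) / 2] ξ := by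
  classical
  obtain ⟨hgS, hξS⟩ := hgξ
  have hDs : ∀ i, ContDiff ℝ (⊤ : ℕ∞) (D i) := hD.1
  have hdiffD : ∀ i x, DifferentiableAt ℝ (D i) x := fun i x =>
    (hDs i).differentiable (by simp) x
  have huS : ContDiff ℝ (⊤ : ℕ∞) u := hnf.1
  have hupos : ∀ y, 0 < u y := hnf.2.1
  have hu0 : ∀ y, u y ≠ 0 := fun y => (hupos y).ne'
  have hune2 : ∀ y, u y - 2 ≠ 0 := fun y => sub_ne_zero.mpr (hu y).2
  have hune1 : ∀ y, 2 * u y - 1 ≠ 0 := fun y => by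
    have h := (hu y).1; intro h2; apply h; linarith
  have hudiff : ∀ x, DifferentiableAt ℝ u x := fun x =>
    huS.differentiable (by simp) x
  have hξdiff : ∀ x, DifferentiableAt ℝ ξ x := fun x =>
    hξS.differentiable (by simp) x
  have hcS : ∀ j k i, ContDiff ℝ (⊤ : ℕ∞) (c j k i) := hc.1
  have hcdiff : ∀ j k i x, DifferentiableAt ℝ (c j k i) x := fun j k i x =>
    (hcS j k i).differentiable (by simp) x
  have hg34S : ContDiff ℝ (⊤ : ℕ∞) (g34fn D c ξ) :=
    ((hcS 2 0 0).neg.add (dirD_contDiff (hDs 2) hξS))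
  have hg23S : ContDiff ℝ (⊤ : ℕ∞) (g23fn D c ξ) :=
    ((hcS 0 1 0).neg.sub (dirD_contDiff (hDs 1) hξS))
  set fA : R3 → ℝ := fun y => -(2 * g34fn D c ξ y / (u y - 2)) with hfA
  set fB : R3 → ℝ := fun y => 2 * u y * g23fn D c ξ y / (2 * u y - 1) with hfB
  have hfAS : ContDiff ℝ (⊤ : ℕ∞) fA :=
    ((contDiff_const.mul hg34S).div (huS.sub contDiff_const) hune2).neg
  have hfBS : ContDiff ℝ (⊤ : ℕ∞) fB :=
    ((contDiff_const.mul huS).mul hg23S).div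
      ((contDiff_const.mul huS).sub contDiff_const) hune1
  have hfAdiff : ∀ x, DifferentiableAt ℝ fA x := fun x =>
    hfAS.differentiable (by simp) x
  have hfBdiff : ∀ x, DifferentiableAt ℝ fB x := fun x =>
    hfBS.differentiable (by simp) x
  have hE0decomp : ∀ y, tiltedD1 D c ξ u y = D 0 y + fA y • D 1 y + fB y • D 2 y := fun y => by
    simp only [tiltedD1, hfA, hfB]
    module
  have hE0fun : tiltedD1 D c ξ u = fun y => D 0 y + fA y • D 1 y + fB y • D 2 y :=
    funext hE0decomp
  have hE0S : ContDiff ℝ (⊤ : ℕ∞) (tiltedD1 D c ξ u) := by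
    rw [hE0fun]
    exact ((hDs 0).add (hfAS.smul (hDs 1))).add (hfBS.smul (hDs 2))
  have hframe : IsFrame ![tiltedD1 D c ξ u, D 1, D 2] := by
    constructor
    · intro i
      fin_cases i
      · simpa using hE0S
      · simpa using hDs 1
      · simpa using hDs 2
    · intro x
      rw [Fintype.linearIndependent_iff]
      intro t ht
      rw [Fin.sum_univ_three] at ht
      simp only [Matrix.cons_val_zero, Matrix.cons_val_one, Matrix.head_cons,
        Matrix.cons_val_two, Matrix.tail_cons] at ht
      rw [hE0decomp x] at ht
      have h1 : t 0 • D 0 x + (t 0 * fA x + t 1) • D 1 x + (t 0 * fB x + t 2) • D 2 x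
          = (0:ℝ) • D 0 x + (0:ℝ) • D 1 x + (0:ℝ) • D 2 x := by
        linear_combination (norm := module) ht
      obtain ⟨e0, e1, e2⟩ := frame_coeff _ (hD.2 x) h1
      intro i
      fin_cases i
      · exact e0
      · rw [e0] at e1; simpa using e1
      · rw [e0] at e2; simpa using e2
  refine ⟨hframe, ⟨?_, hξS⟩, ?_⟩
  · intro i
    fin_cases i
    · simpa using contDiff_const
    · simpa using (contDiff_const.sub huS).div_const 2
    · have hh : ContDiff ℝ (⊤ : ℕ∞) fun x : R3 => (1 - 1 / u x) / 2 :=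
        (contDiff_const.sub (contDiff_const.div huS hu0)).div_const 2
      simpa using hh
  intro ctil hctil
  have hg0v : ∀ y, g 0 y = 1 / 2 := hnf.2.2.1
  have hg1v : ∀ y, g 1 y = -(1 + u y) / 2 := hnf.2.2.2.1
  have hg2v : ∀ y, g 2 y = -(1 + 1 / u y) / 2 := hnf.2.2.2.2.1
  have hc120v : ∀ y, c 1 2 0 y = -2 := hnf.2.2.2.2.2
  have hexp : ∀ j k y, lieB (D j) (D k) y
      = c j k 0 y • D 0 y + c j k 1 y • D 1 y + c j k 2 y • D 2 y :=
    fun j k y => (hc.2 j k y).trans (Fin.sum_univ_three _)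
  have hswap0 : ∀ (X Y : R3 → R3) (y : R3), lieB X Y y + lieB Y X y = 0 := fun X Y y => by
    simp only [lieB]; abel
  have hanti : ∀ j k i y, c j k i y = -(c k j i y) := by
    intro j k i y
    have hv : c j k 0 y • D 0 y + c j k 1 y • D 1 y + c j k 2 y • D 2 y
        = (-(c k j 0 y)) • D 0 y + (-(c k j 1 y)) • D 1 y + (-(c k j 2 y)) • D 2 y := by
      linear_combination (norm := module) hswap0 (D j) (D k) y - hexp j k y - hexp k j y
    obtain ⟨e0, e1, e2⟩ := frame_coeff _ (hD.2 y) hv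
    fin_cases i <;> assumption
  have hdiag : ∀ j i y, c j j i y = 0 := by
    intro j i y
    have hself : lieB (D j) (D j) y = 0 := sub_self _
    have hv : c j j 0 y • D 0 y + c j j 1 y • D 1 y + c j j 2 y • D 2 y
        = (0 : ℝ) • D 0 y + (0 : ℝ) • D 1 y + (0 : ℝ) • D 2 y := by
      linear_combination (norm := module) hself - hexp j j y
    obtain ⟨e0, e1, e2⟩ := frame_coeff _ (hD.2 y) hv
    fin_cases i <;> assumption
  have hct12 : ∀ y, ctil 1 2 0 y = -2 ∧ ctil 1 2 1 y = c 1 2 1 y + 2 * fA y ∧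
      ctil 1 2 2 y = c 1 2 2 y + 2 * fB y := by
    intro y
    have hb := hctil.2 1 2 y
    rw [Fin.sum_univ_three] at hb
    simp only [Matrix.cons_val_zero, Matrix.cons_val_one, Matrix.head_cons,
      Matrix.cons_val_two, Matrix.tail_cons] at hb
    rw [hE0decomp y, hexp 1 2 y] at hb
    have hv : c 1 2 0 y • D 0 y + c 1 2 1 y • D 1 y + c 1 2 2 y • D 2 y
        = (ctil 1 2 0 y) • D 0 y + (ctil 1 2 0 y * fA y + ctil 1 2 1 y) • D 1 y
          + (ctil 1 2 0 y * fB y + ctil 1 2 2 y) • D 2 y := by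
      linear_combination (norm := module) hb
    obtain ⟨e0, e1, e2⟩ := frame_coeff _ (hD.2 y) hv
    have h120 : ctil 1 2 0 y = -2 := by rw [← e0, hc120v y]
    rw [h120] at e1 e2
    exact ⟨h120, by linarith, by linarith⟩
  have hct01 : ∀ y, ctil 0 1 0 y = c 0 1 0 y + 2 * fB y ∧
      ctil 0 1 1 y = c 0 1 1 y + fB y * c 2 1 1 y - dirD (D 1) fA y
        - (c 0 1 0 y + 2 * fB y) * fA y ∧
      ctil 0 1 2 y = c 0 1 2 y + fB y * c 2 1 2 y - dirD (D 1) fB y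
        - (c 0 1 0 y + 2 * fB y) * fB y := by
    intro y
    have hb := hctil.2 0 1 y
    rw [Fin.sum_univ_three] at hb
    simp only [Matrix.cons_val_zero, Matrix.cons_val_one, Matrix.head_cons,
      Matrix.cons_val_two, Matrix.tail_cons] at hb
    rw [hE0decomp y, hE0fun] at hb
    rw [lieB_left2 (D 0) (D 1) (D 2) (D 1) fA fB y (hdiffD 0 y) (hdiffD 1 y) (hdiffD 2 y)
      (hfAdiff y) (hfBdiff y)] at hb
    rw [hexp 0 1 y, hexp 2 1 y] at hb
    have hself : lieB (D 1) (D 1) y = 0 := sub_self _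
    rw [hself] at hb
    have hv : (c 0 1 0 y + fB y * c 2 1 0 y) • D 0 y
          + (c 0 1 1 y + fB y * c 2 1 1 y - dirD (D 1) fA y) • D 1 y
          + (c 0 1 2 y + fB y * c 2 1 2 y - dirD (D 1) fB y) • D 2 y
        = (ctil 0 1 0 y) • D 0 y + (ctil 0 1 0 y * fA y + ctil 0 1 1 y) • D 1 y
          + (ctil 0 1 0 y * fB y + ctil 0 1 2 y) • D 2 y := by
      linear_combination (norm := module) hb
    obtain ⟨e0, e1, e2⟩ := frame_coeff _ (hD.2 y) hv
    have h210 : c 2 1 0 y = 2 := by rw [hanti 2 1 0 y, hc120v y]; norm_num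
    rw [h210] at e0
    have h010 : ctil 0 1 0 y = c 0 1 0 y + 2 * fB y := by linarith
    rw [h010] at e1 e2
    exact ⟨h010, by linarith, by linarith⟩
  have hct02 : ∀ y, ctil 0 2 0 y = c 0 2 0 y - 2 * fA y ∧
      ctil 0 2 1 y = c 0 2 1 y + fA y * c 1 2 1 y - dirD (D 2) fA y
        - (c 0 2 0 y - 2 * fA y) * fA y ∧
      ctil 0 2 2 y = c 0 2 2 y + fA y * c 1 2 2 y - dirD (D 2) fB y
        - (c 0 2 0 y - 2 * fA y) * fB y := by
    intro y
    have hb := hctil.2 0 2 y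
    rw [Fin.sum_univ_three] at hb
    simp only [Matrix.cons_val_zero, Matrix.cons_val_one, Matrix.head_cons,
      Matrix.cons_val_two, Matrix.tail_cons] at hb
    rw [hE0decomp y, hE0fun] at hb
    rw [lieB_left2 (D 0) (D 1) (D 2) (D 2) fA fB y (hdiffD 0 y) (hdiffD 1 y) (hdiffD 2 y)
      (hfAdiff y) (hfBdiff y)] at hb
    rw [hexp 0 2 y, hexp 1 2 y] at hb
    have hself : lieB (D 2) (D 2) y = 0 := sub_self _
    rw [hself] at hb
    have hv : (c 0 2 0 y + fA y * c 1 2 0 y) • D 0 y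
          + (c 0 2 1 y + fA y * c 1 2 1 y - dirD (D 2) fA y) • D 1 y
          + (c 0 2 2 y + fA y * c 1 2 2 y - dirD (D 2) fB y) • D 2 y
        = (ctil 0 2 0 y) • D 0 y + (ctil 0 2 0 y * fA y + ctil 0 2 1 y) • D 1 y
          + (ctil 0 2 0 y * fB y + ctil 0 2 2 y) • D 2 y := by
      linear_combination (norm := module) hb
    obtain ⟨e0, e1, e2⟩ := frame_coeff _ (hD.2 y) hv
    rw [hc120v y] at e0
    have h020 : ctil 0 2 0 y = c 0 2 0 y - 2 * fA y := by linarith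
    rw [h020] at e1 e2
    exact ⟨h020, by linarith, by linarith⟩
  have hat10 : ∀ y, ctil 1 0 0 y = -(ctil 0 1 0 y) := by
    intro y
    have hb1 := hctil.2 0 1 y
    have hb2 := hctil.2 1 0 y
    rw [Fin.sum_univ_three] at hb1 hb2
    simp only [Matrix.cons_val_zero, Matrix.cons_val_one, Matrix.head_cons,
      Matrix.cons_val_two, Matrix.tail_cons] at hb1 hb2
    rw [hE0decomp y] at hb1 hb2
    have hv : (ctil 0 1 0 y + ctil 1 0 0 y) • D 0 y
          + ((ctil 0 1 0 y + ctil 1 0 0 y) * fA y + ctil 0 1 1 y + ctil 1 0 1 y) • D 1 y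
          + ((ctil 0 1 0 y + ctil 1 0 0 y) * fB y + ctil 0 1 2 y + ctil 1 0 2 y) • D 2 y
        = (0 : ℝ) • D 0 y + (0 : ℝ) • D 1 y + (0 : ℝ) • D 2 y := by
      linear_combination (norm := module) hswap0 (tiltedD1 D c ξ u) (D 1) y - hb1 - hb2
    obtain ⟨e0, e1, e2⟩ := frame_coeff _ (hD.2 y) hv
    linarith
  have hat20 : ∀ y, ctil 2 0 0 y = -(ctil 0 2 0 y) ∧ ctil 2 0 2 y = -(ctil 0 2 2 y) := by
    intro y
    have hb1 := hctil.2 0 2 y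
    have hb2 := hctil.2 2 0 y
    rw [Fin.sum_univ_three] at hb1 hb2
    simp only [Matrix.cons_val_zero, Matrix.cons_val_one, Matrix.head_cons,
      Matrix.cons_val_two, Matrix.tail_cons] at hb1 hb2
    rw [hE0decomp y] at hb1 hb2
    have hv : (ctil 0 2 0 y + ctil 2 0 0 y) • D 0 y
          + ((ctil 0 2 0 y + ctil 2 0 0 y) * fA y + ctil 0 2 1 y + ctil 2 0 1 y) • D 1 y
          + ((ctil 0 2 0 y + ctil 2 0 0 y) * fB y + ctil 0 2 2 y + ctil 2 0 2 y) • D 2 y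
        = (0 : ℝ) • D 0 y + (0 : ℝ) • D 1 y + (0 : ℝ) • D 2 y := by
      linear_combination (norm := module) hswap0 (tiltedD1 D c ξ u) (D 2) y - hb1 - hb2
    obtain ⟨e0, e1, e2⟩ := frame_coeff _ (hD.2 y) hv
    constructor
    · linarith
    · have hz : ctil 0 2 0 y + ctil 2 0 0 y = 0 := by linarith
      rw [hz] at e2
      simp at e2
      linarith
  have hat21 : ∀ y, ctil 2 1 1 y = -(ctil 1 2 1 y) := by
    intro y
    have hb1 := hctil.2 1 2 y
    have hb2 := hctil.2 2 1 y
    rw [Fin.sum_univ_three] at hb1 hb2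
    simp only [Matrix.cons_val_zero, Matrix.cons_val_one, Matrix.head_cons,
      Matrix.cons_val_two, Matrix.tail_cons] at hb1 hb2
    rw [hE0decomp y] at hb1 hb2
    have hv : (ctil 1 2 0 y + ctil 2 1 0 y) • D 0 y
          + ((ctil 1 2 0 y + ctil 2 1 0 y) * fA y + ctil 1 2 1 y + ctil 2 1 1 y) • D 1 y
          + ((ctil 1 2 0 y + ctil 2 1 0 y) * fB y + ctil 1 2 2 y + ctil 2 1 2 y) • D 2 y
        = (0 : ℝ) • D 0 y + (0 : ℝ) • D 1 y + (0 : ℝ) • D 2 y := by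
      linear_combination (norm := module) hswap0 (D 1) (D 2) y - hb1 - hb2
    obtain ⟨e0, e1, e2⟩ := frame_coeff _ (hD.2 y) hv
    have hz : ctil 1 2 0 y + ctil 2 1 0 y = 0 := by linarith
    rw [hz] at e1
    simp at e1
    linarith
  have hgd : ∀ i, Differentiable ℝ (g i) := fun i =>
    (hgS i).differentiable (by simp)
  have hw01f : (fun z => g 0 z + g 1 z) = fun z => -(1 / 2 : ℝ) * u z := funext fun z => by
    rw [hg0v z, hg1v z]; ring
  have hvC : ∀ (i : Fin 3) y, dirD (D i) (fun z => g 0 z + g 1 z) y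
      = -(1 / 2) * fderiv ℝ u y (D i y) := by
    intro i y
    simp only [dirD]
    rw [hw01f, ((hudiff y).hasFDerivAt.const_mul (-(1 / 2 : ℝ))).fderiv]
    simp [smul_eq_mul]
  have hvB : ∀ (i : Fin 3) y, dirD (D i) (fun z => g 2 z + g 0 z) y * (u y) ^ 2
      = fderiv ℝ u y (D i y) / 2 := by
    intro i y
    have hwd : DifferentiableAt ℝ (fun z => g 2 z + g 0 z) y :=
      ((hgd 2) y).add ((hgd 0) y)
    have hprod : (fun z => (g 2 z + g 0 z) * u z) = fun _ => -(1 / 2 : ℝ) :=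
      funext fun z => by rw [hg2v z, hg0v z]; field_simp [hu0 z]; ring
    have h1 : HasFDerivAt (fun z => (g 2 z + g 0 z) * u z)
        ((g 2 y + g 0 y) • fderiv ℝ u y + u y • fderiv ℝ (fun z => g 2 z + g 0 z) y) y :=
      hwd.hasFDerivAt.mul (hudiff y).hasFDerivAt
    have h2 : HasFDerivAt (fun z => (g 2 z + g 0 z) * u z) (0 : R3 →L[ℝ] ℝ) y := by
      rw [hprod]; exact hasFDerivAt_const _ _
    have h4 := DFunLike.congr_fun (h1.unique h2) (D i y)
    simp only [ContinuousLinearMap.add_apply, ContinuousLinearMap.coe_smul', Pi.smul_apply,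
      ContinuousLinearMap.zero_apply, smul_eq_mul] at h4
    have h5 : (g 2 y + g 0 y) * u y = -(1 / 2) := by
      rw [hg2v y, hg0v y]; field_simp [hu0 y]; ring
    simp only [dirD]
    linear_combination u y * h4 - fderiv ℝ u y (D i y) * h5
  have hvA : ∀ (i : Fin 3) y, dirD (D i) (fun z => g 1 z + g 2 z) y * (2 * (u y) ^ 2)
      = (1 - (u y) ^ 2) * fderiv ℝ u y (D i y) := by
    intro i y
    have hwd : DifferentiableAt ℝ (fun z => g 1 z + g 2 z) y :=
      ((hgd 1) y).add ((hgd 2) y)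
    have hprod : (fun z => ((g 1 z + g 2 z + 1) + (1 / 2) * u z) * u z)
        = fun _ => -(1 / 2 : ℝ) :=
      funext fun z => by rw [hg1v z, hg2v z]; field_simp [hu0 z]; ring
    have hcf : HasFDerivAt (fun z => (g 1 z + g 2 z + 1) + (1 / 2) * u z)
        (fderiv ℝ (fun z => g 1 z + g 2 z) y + (1 / 2 : ℝ) • fderiv ℝ u y) y :=
      (hwd.hasFDerivAt.add_const 1).add ((hudiff y).hasFDerivAt.const_mul (1 / 2))
    have h1 : HasFDerivAt (fun z => ((g 1 z + g 2 z + 1) + (1 / 2) * u z) * u z)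
        (((g 1 y + g 2 y + 1) + (1 / 2) * u y) • fderiv ℝ u y
          + u y • (fderiv ℝ (fun z => g 1 z + g 2 z) y + (1 / 2 : ℝ) • fderiv ℝ u y)) y :=
      hcf.mul (hudiff y).hasFDerivAt
    have h2 : HasFDerivAt (fun z => ((g 1 z + g 2 z + 1) + (1 / 2) * u z) * u z)
        (0 : R3 →L[ℝ] ℝ) y := by
      rw [hprod]; exact hasFDerivAt_const _ _
    have h4 := DFunLike.congr_fun (h1.unique h2) (D i y)
    simp only [ContinuousLinearMap.add_apply, ContinuousLinearMap.coe_smul', Pi.smul_apply,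
      ContinuousLinearMap.zero_apply, smul_eq_mul] at h4
    have h5 : ((g 1 y + g 2 y + 1) + (1 / 2) * u y) * (2 * u y) = -1 := by
      rw [hg1v y, hg2v y]; field_simp [hu0 y]; ring
    simp only [dirD]
    linear_combination 2 * u y * h4 - fderiv ℝ u y (D i y) * h5
  have hg34diff : ∀ y, DifferentiableAt ℝ (g34fn D c ξ) y := fun y =>
    hg34S.differentiable (by simp) y
  have hg23diff : ∀ y, DifferentiableAt ℝ (g23fn D c ξ) y := fun y =>
    hg23S.differentiable (by simp) y
  have hdxi1diff : ∀ y, DifferentiableAt ℝ (dirD (D 1) ξ) y := fun y =>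
    (dirD_contDiff (hDs 1) hξS).differentiable (by simp) y
  have hdxi2diff : ∀ y, DifferentiableAt ℝ (dirD (D 2) ξ) y := fun y =>
    (dirD_contDiff (hDs 2) hξS).differentiable (by simp) y
  have hg34' : ∀ y, HasFDerivAt (g34fn D c ξ)
      (-(fderiv ℝ (c 2 0 0) y) + fderiv ℝ (dirD (D 2) ξ) y) y := fun y =>
    ((hcdiff 2 0 0 y).hasFDerivAt.neg.add (hdxi2diff y).hasFDerivAt)
  have hg23' : ∀ y, HasFDerivAt (g23fn D c ξ)
      (-(fderiv ℝ (c 0 1 0) y) - fderiv ℝ (dirD (D 1) ξ) y) y := fun y =>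
    ((hcdiff 0 1 0 y).hasFDerivAt.neg.sub (hdxi1diff y).hasFDerivAt)
  have hDA : ∀ y, fA y * fderiv ℝ u y (D 1 y) + (u y - 2) * dirD (D 1) fA y
      = -2 * (-(fderiv ℝ (c 2 0 0) y (D 1 y)) + fderiv ℝ (dirD (D 2) ξ) y (D 1 y)) := by
    intro y
    have hprod : (fun z => fA z * (u z - 2)) = fun z => -2 * g34fn D c ξ z :=
      funext fun z => by
        show -(2 * g34fn D c ξ z / (u z - 2)) * (u z - 2) = -2 * g34fn D c ξ z
        field_simp [hune2 z]
    have h1 : HasFDerivAt (fun z => fA z * (u z - 2))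
        (fA y • fderiv ℝ u y + (u y - 2) • fderiv ℝ fA y) y := by
      exact (hfAdiff y).hasFDerivAt.mul ((hudiff y).hasFDerivAt.sub_const 2)
    have h2 : HasFDerivAt (fun z => fA z * (u z - 2))
        ((-2 : ℝ) • (-(fderiv ℝ (c 2 0 0) y) + fderiv ℝ (dirD (D 2) ξ) y)) y := by
      rw [hprod]; exact (hg34' y).const_mul (-2)
    have h4 := DFunLike.congr_fun (h1.unique h2) (D 1 y)
    simp only [ContinuousLinearMap.add_apply, ContinuousLinearMap.coe_smul', Pi.smul_apply,
      ContinuousLinearMap.neg_apply, smul_eq_mul] at h4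
    simp only [dirD]
    linear_combination h4
  have hDB : ∀ y, fB y * (2 * fderiv ℝ u y (D 2 y)) + (2 * u y - 1) * dirD (D 2) fB y
      = 2 * (fderiv ℝ u y (D 2 y) * g23fn D c ξ y
        + u y * (-(fderiv ℝ (c 0 1 0) y (D 2 y)) - fderiv ℝ (dirD (D 1) ξ) y (D 2 y))) := by
    intro y
    have hprod : (fun z => fB z * (2 * u z - 1)) = fun z => 2 * u z * g23fn D c ξ z :=
      funext fun z => by
        show 2 * u z * g23fn D c ξ z / (2 * u z - 1) * (2 * u z - 1) = 2 * u z * g23fn D c ξ z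
        field_simp [hune1 z]
    have h1 : HasFDerivAt (fun z => fB z * (2 * u z - 1))
        (fB y • ((2 : ℝ) • fderiv ℝ u y) + (2 * u y - 1) • fderiv ℝ fB y) y := by
      exact (hfBdiff y).hasFDerivAt.mul (((hudiff y).hasFDerivAt.const_mul 2).sub_const 1)
    have h2 : HasFDerivAt (fun z => fB z * (2 * u z - 1))
        ((2 * u y) • (-(fderiv ℝ (c 0 1 0) y) - fderiv ℝ (dirD (D 1) ξ) y)
          + g23fn D c ξ y • ((2 : ℝ) • fderiv ℝ u y)) y := by
      rw [hprod]
      exact ((hudiff y).hasFDerivAt.const_mul 2).mul (hg23' y)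
    have h4 := DFunLike.congr_fun (h1.unique h2) (D 2 y)
    simp only [ContinuousLinearMap.add_apply, ContinuousLinearMap.coe_smul', Pi.smul_apply,
      ContinuousLinearMap.neg_apply, ContinuousLinearMap.sub_apply, smul_eq_mul] at h4
    simp only [dirD]
    linear_combination h4
  have hES : ∀ y, dirD (D 1) (dirD (D 2) ξ) y - dirD (D 2) (dirD (D 1) ξ) y
      = -2 * dirD (D 0) ξ y + c 1 2 1 y * dirD (D 1) ξ y + c 1 2 2 y * dirD (D 2) ξ y := by
    intro y
    have hcm := dirD_comm hξS (hdiffD 1 y) (hdiffD 2 y)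
    rw [hexp 1 2 y] at hcm
    simp only [map_add, map_smul, smul_eq_mul] at hcm
    rw [hcm, hc120v y]
    try simp only [dirD]
    try ring
  have hEJ : ∀ y, fderiv ℝ (c 2 0 0) y (D 1 y) + fderiv ℝ (c 0 1 0) y (D 2 y)
      = -(c 1 2 1 y) * c 0 1 0 y + c 1 2 2 y * c 2 0 0 y + 2 * c 2 0 2 y - 2 * c 0 1 1 y := by
    intro y
    have hcd : ∀ i : Fin 3, ContDiffAt ℝ 2 (D i) y := fun i =>
      (hDs i).contDiffAt.of_le two_le_inftop
    have hJ : lieB (D 0) (lieB (D 1) (D 2)) y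
        = lieB (lieB (D 0) (D 1)) (D 2) y + lieB (D 1) (lieB (D 0) (D 2)) y :=
      VectorField.leibniz_identity_lieBracket (by simp) (hcd 0) (hcd 1) (hcd 2)
    have hF12 : lieB (D 1) (D 2)
        = fun z => c 1 2 0 z • D 0 z + c 1 2 1 z • D 1 z + c 1 2 2 z • D 2 z :=
      funext fun z => hexp 1 2 z
    have hF01 : lieB (D 0) (D 1)
        = fun z => c 0 1 0 z • D 0 z + c 0 1 1 z • D 1 z + c 0 1 2 z • D 2 z :=
      funext fun z => hexp 0 1 z
    have hF02 : lieB (D 0) (D 2)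
        = fun z => c 0 2 0 z • D 0 z + c 0 2 1 z • D 1 z + c 0 2 2 z • D 2 z :=
      funext fun z => hexp 0 2 z
    rw [hF12, hF01, hF02] at hJ
    rw [lieB_right3 (D 0) (D 1) (D 2) (D 0) (c 1 2 0) (c 1 2 1) (c 1 2 2) y
        (hdiffD 0 y) (hdiffD 1 y) (hdiffD 2 y) (hcdiff 1 2 0 y) (hcdiff 1 2 1 y)
        (hcdiff 1 2 2 y),
      lieB_left3 (D 0) (D 1) (D 2) (D 2) (c 0 1 0) (c 0 1 1) (c 0 1 2) y
        (hdiffD 0 y) (hdiffD 1 y) (hdiffD 2 y) (hcdiff 0 1 0 y) (hcdiff 0 1 1 y)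
        (hcdiff 0 1 2 y),
      lieB_right3 (D 0) (D 1) (D 2) (D 1) (c 0 2 0) (c 0 2 1) (c 0 2 2) y
        (hdiffD 0 y) (hdiffD 1 y) (hdiffD 2 y) (hcdiff 0 2 0 y) (hcdiff 0 2 1 y)
        (hcdiff 0 2 2 y)] at hJ
    rw [hexp 0 0 y, hexp 0 1 y, hexp 0 2 y, hexp 1 0 y, hexp 1 1 y, hexp 1 2 y,
      hexp 2 2 y] at hJ
    have hv : (c 1 2 0 y * c 0 0 0 y + c 1 2 1 y * c 0 1 0 y + c 1 2 2 y * c 0 2 0 y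
          + dirD (D 0) (c 1 2 0) y) • D 0 y
        + (c 1 2 0 y * c 0 0 1 y + c 1 2 1 y * c 0 1 1 y + c 1 2 2 y * c 0 2 1 y
          + dirD (D 0) (c 1 2 1) y) • D 1 y
        + (c 1 2 0 y * c 0 0 2 y + c 1 2 1 y * c 0 1 2 y + c 1 2 2 y * c 0 2 2 y
          + dirD (D 0) (c 1 2 2) y) • D 2 y
        = (c 0 1 0 y * c 0 2 0 y + c 0 1 1 y * c 1 2 0 y + c 0 1 2 y * c 2 2 0 y
            - dirD (D 2) (c 0 1 0) y
            + c 0 2 0 y * c 1 0 0 y + c 0 2 1 y * c 1 1 0 y + c 0 2 2 y * c 1 2 0 y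
            + dirD (D 1) (c 0 2 0) y) • D 0 y
          + (c 0 1 0 y * c 0 2 1 y + c 0 1 1 y * c 1 2 1 y + c 0 1 2 y * c 2 2 1 y
            - dirD (D 2) (c 0 1 1) y
            + c 0 2 0 y * c 1 0 1 y + c 0 2 1 y * c 1 1 1 y + c 0 2 2 y * c 1 2 1 y
            + dirD (D 1) (c 0 2 1) y) • D 1 y
          + (c 0 1 0 y * c 0 2 2 y + c 0 1 1 y * c 1 2 2 y + c 0 1 2 y * c 2 2 2 y
            - dirD (D 2) (c 0 1 2) y
            + c 0 2 0 y * c 1 0 2 y + c 0 2 1 y * c 1 1 2 y + c 0 2 2 y * c 1 2 2 y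
            + dirD (D 1) (c 0 2 2) y) • D 2 y := by
      linear_combination (norm := module) hJ
    obtain ⟨e0, _, _⟩ := frame_coeff _ (hD.2 y) hv
    have hc120f : (c 1 2 0 : R3 → ℝ) = fun _ => (-2 : ℝ) := funext hc120v
    have hd120 : dirD (D 0) (c 1 2 0) y = 0 := by
      simp [dirD, hc120f]
    have h020f : (c 0 2 0 : R3 → ℝ) = fun z => -(c 2 0 0 z) :=
      funext fun z => hanti 0 2 0 z
    have hd020 : dirD (D 1) (c 0 2 0) y = -(fderiv ℝ (c 2 0 0) y (D 1 y)) := by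
      simp [dirD, h020f, fderiv_neg]
    have hd010 : dirD (D 2) (c 0 1 0) y = fderiv ℝ (c 0 1 0) y (D 2 y) := rfl
    rw [hd120, hd020, hd010, hdiag 0 0 y, hdiag 2 0 y, hdiag 1 0 y, hc120v y,
      hanti 0 2 0 y, hanti 1 0 0 y, hanti 0 2 2 y] at e0
    linarith
  refine ⟨fun y => ?_, ?_⟩
  · simp only [Matrix.cons_val_zero, Matrix.cons_val_one, Matrix.head_cons,
      Matrix.cons_val_two, Matrix.tail_cons]
    have h1 := hu0 y
    field_simp
    ring
  intro i j k hcyc y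
  rcases hcyc with h | h | h
  · -- case (0, 1, 2)
    obtain ⟨rfl, rfl, rfl⟩ : i = 0 ∧ j = 1 ∧ k = 2 := by simpa [Prod.ext_iff] using h
    simp only [Matrix.cons_val_zero, Matrix.cons_val_one, Matrix.head_cons,
      Matrix.cons_val_two, Matrix.tail_cons]
    have hfun : (fun z => (1 - u z) / 2 + (1 - 1 / u z) / 2)
        = fun z => (g 1 z + g 2 z) + 2 :=
      funext fun z => by rw [hg1v z, hg2v z]; ring
    rw [hfun]
    have hd1 : dirD (tiltedD1 D c ξ u) (fun z => (g 1 z + g 2 z) + 2) y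
        = dirD (D 0) (fun z => g 1 z + g 2 z) y
          + fA y * dirD (D 1) (fun z => g 1 z + g 2 z) y
          + fB y * dirD (D 2) (fun z => g 1 z + g 2 z) y := by
      simp only [dirD]
      rw [fderiv_add_const, hE0decomp y, map_add, map_add, map_smul, map_smul]
      simp [smul_eq_mul]
    have hd2 : dirD (tiltedD1 D c ξ u) ξ y
        = dirD (D 0) ξ y + fA y * dirD (D 1) ξ y + fB y * dirD (D 2) ξ y := by
      simp only [dirD]
      rw [hE0decomp y, map_add, map_add, map_smul, map_smul]
      simp [smul_eq_mul]
    rw [hd1, hd2]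
    rw [(hct01 y).2.1, (hct02 y).2.2, hanti 2 1 1 y, hanti 0 2 2 y, hanti 0 2 0 y]
    have E0y := hcon.2 0 1 2 (Or.inl rfl) y
    rw [hg0v y, hg1v y, hg2v y, hanti 0 2 2 y] at E0y
    have E1y := hcon.2 1 2 0 (Or.inr (Or.inl rfl)) y
    rw [hg0v y, hg1v y, hg2v y, hanti 1 0 0 y] at E1y
    have E2y := hcon.2 2 0 1 (Or.inr (Or.inr rfl)) y
    rw [hg0v y, hg1v y, hg2v y, hanti 2 1 1 y] at E2y
    have h1 := hu0 y
    have h2 := hune2 y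
    have h3 := hune1 y
    have hA0 : dirD (D 0) (fun z => g 1 z + g 2 z) y
        = (1 - u y ^ 2) * fderiv ℝ u y (D 0 y) / (2 * u y ^ 2) := by
      rw [eq_div_iff (by positivity)]; exact hvA 0 y
    have hA1 : dirD (D 1) (fun z => g 1 z + g 2 z) y
        = (1 - u y ^ 2) * fderiv ℝ u y (D 1 y) / (2 * u y ^ 2) := by
      rw [eq_div_iff (by positivity)]; exact hvA 1 y
    have hA2 : dirD (D 2) (fun z => g 1 z + g 2 z) y
        = (1 - u y ^ 2) * fderiv ℝ u y (D 2 y) / (2 * u y ^ 2) := by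
      rw [eq_div_iff (by positivity)]; exact hvA 2 y
    have hB1 : dirD (D 1) (fun z => g 2 z + g 0 z) y
        = fderiv ℝ u y (D 1 y) / (2 * u y ^ 2) := by
      rw [eq_div_iff (by positivity)]; linear_combination 2 * hvB 1 y
    have hC2 : dirD (D 2) (fun z => g 0 z + g 1 z) y
        = -(1 / 2) * fderiv ℝ u y (D 2 y) := hvC 2 y
    have hDA1 : dirD (D 1) fA y
        = (-2 * (-(fderiv ℝ (c 2 0 0) y (D 1 y)) + fderiv ℝ (dirD (D 2) ξ) y (D 1 y))
            - fA y * fderiv ℝ u y (D 1 y)) / (u y - 2) := by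
      rw [eq_div_iff h2]; linear_combination hDA y
    have hDB2 : dirD (D 2) fB y
        = (2 * (fderiv ℝ u y (D 2 y) * g23fn D c ξ y
            + u y * (-(fderiv ℝ (c 0 1 0) y (D 2 y)) - fderiv ℝ (dirD (D 1) ξ) y (D 2 y)))
            - fB y * (2 * fderiv ℝ u y (D 2 y))) / (2 * u y - 1) := by
      rw [eq_div_iff h3]; linear_combination hDB y
    rw [hA0, hA1, hA2, hDA1, hDB2]
    rw [hA0] at E0y
    rw [hB1] at E1y
    rw [hC2] at E2y
    have hfAv : fA y = -(2 * (-(c 2 0 0 y) + dirD (D 2) ξ y) / (u y - 2)) := rfl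
    have hfBv : fB y = 2 * u y * (-(c 0 1 0 y) - dirD (D 1) ξ y) / (2 * u y - 1) := rfl
    have hg23v : g23fn D c ξ y = -(c 0 1 0 y) - dirD (D 1) ξ y := rfl
    rw [hfAv, hfBv, hg23v]
    have ESy := hES y
    have EJy := hEJ y
    simp only [dirD] at E0y E1y E2y ESy ⊢
    have h3' : u y * 2 - 1 ≠ 0 := by rwa [mul_comm]
    linear_combination (norm := (field_simp; ring1))
      E0y + (2 * (c 2 0 0 y - fderiv ℝ ξ y (D 2 y)) / (u y - 2)) * E1y
        + (2 * u y * (-(c 0 1 0 y) - fderiv ℝ ξ y (D 1 y)) / (2 * u y - 1)) * E2y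
        - EJy + ESy
  · -- case (1, 2, 0)
    obtain ⟨rfl, rfl, rfl⟩ : i = 1 ∧ j = 2 ∧ k = 0 := by simpa [Prod.ext_iff] using h
    simp only [Matrix.cons_val_zero, Matrix.cons_val_one, Matrix.head_cons,
      Matrix.cons_val_two, Matrix.tail_cons]
    have hfun : (fun z => (1 - 1 / u z) / 2 + -(1 / 2 : ℝ)) = fun z => g 2 z + g 0 z :=
      funext fun z => by rw [hg2v z, hg0v z]; ring
    rw [hfun]
    have E1y := hcon.2 1 2 0 (Or.inr (Or.inl rfl)) y
    rw [hg0v y, hg1v y, hg2v y, hanti 1 0 0 y] at E1y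
    rw [(hct12 y).2.2, hat10 y, (hct01 y).1]
    have hfBv : fB y = 2 * u y * (-(c 0 1 0 y) - dirD (D 1) ξ y) / (2 * u y - 1) := rfl
    rw [hfBv]
    have h1 := hu0 y
    have h2 := hune1 y
    linear_combination (norm := (field_simp; ring1)) E1y
  · -- case (2, 0, 1)
    obtain ⟨rfl, rfl, rfl⟩ : i = 2 ∧ j = 0 ∧ k = 1 := by simpa [Prod.ext_iff] using h
    simp only [Matrix.cons_val_zero, Matrix.cons_val_one, Matrix.head_cons,
      Matrix.cons_val_two, Matrix.tail_cons]
    have hfun : (fun z => -(1 / 2 : ℝ) + (1 - u z) / 2) = fun z => g 0 z + g 1 z :=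
      funext fun z => by rw [hg0v z, hg1v z]; ring
    rw [hfun]
    have E2y := hcon.2 2 0 1 (Or.inr (Or.inr rfl)) y
    rw [hg0v y, hg1v y, hg2v y, hanti 2 1 1 y] at E2y
    rw [(hat20 y).1, (hct02 y).1, hanti 0 2 0 y, hat21 y, (hct12 y).2.1]
    have hfAv : fA y = -(2 * (-(c 2 0 0 y) + dirD (D 2) ξ y) / (u y - 2)) := rfl
    rw [hfAv]
    have h1 := hu0 y
    have h2 := hune2 y
    linear_combination (norm := (field_simp; ring1)) E2y
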